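/- arXiv:1002.2771 — 5 statements merged into one kernel-verified Lean document; each statement's English description precedes it below -/
import Mathlib

section
/- Let I be a small category, 𝒥 : I ⥤ Cat a functor, and i an object of I. The functor ε'_i : 𝒥(i) ⥤ (∫_I 𝒥)/i into the comma category of the projection ρ : ∫_I 𝒥 ⥤ I over i, which sends an object j of 𝒥(i) to the object ((i,j), id_i), admits a left adjoint; this left adjoint sends an object ((i',j'), f : i' → i) of (∫_I 𝒥)/i to the object (𝒥 f)(j') of 𝒥(i). -/
/-!
Statement 0: Let `I` be a small category, `𝒥 : I ⥤ Cat` a functor, and `i` an object of `I`.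
The functor `ε'_i : 𝒥(i) ⥤ (∫_I 𝒥)/i` into the comma category of the projection
`ρ : ∫_I 𝒥 ⥤ I` over `i`, sending `j` to `((i,j), id_i)`, admits a left adjoint; this left
adjoint sends an object `((i',j'), f : i' → i)` to `(𝒥 f)(j')`.
-/

open CategoryTheory

universe u

/-- The functor `ε'_i : 𝒥(i) ⥤ (∫_I 𝒥)/i`, sending `j : 𝒥(i)` to the object
`((i, j), 𝟙 i)` of the comma category of the projection `ρ = Grothendieck.forget 𝒥`
over `i`. -/
def epsilonComma {I : Type u} [SmallCategory I] (𝒥 : I ⥤ Cat.{u, u}) (i : I) :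
    (𝒥.obj i : Type u) ⥤ CostructuredArrow (Grothendieck.forget 𝒥) i :=
  (Grothendieck.ι 𝒥 i).toCostructuredArrow (Grothendieck.forget 𝒥) i
    (fun _ => 𝟙 i) (fun g => by exact Category.comp_id _)

lemma eqToHom_map_eqToHom_aux {A B : Type*} [Category A] [Category B] (F : A ⥤ B) {a a' : A}
    (q : a' = a) (p : F.obj a = F.obj a') : eqToHom p ≫ F.map (eqToHom q) = 𝟙 _ := by
  subst q; simp

lemma map_comp_aux {A B C : Type*} [Category A] [Category B] [Category C] (F : A ⥤ B)
    (G : B ⥤ C) (H : A ⥤ C) (e : F ⋙ G = H) {a a' : A} {b b' : B} (φ : a ⟶ a')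
    (ψ : F.obj a' ⟶ b') (p : b = F.obj a) {c : C} (q : c = G.obj b) (r : c = H.obj a)
    (s : H.obj a' = G.obj (F.obj a')) :
    eqToHom q ≫ G.map (eqToHom p ≫ F.map φ ≫ ψ) = (eqToHom r ≫ H.map φ) ≫ eqToHom s ≫ G.map ψ := by
  subst e; subst p; simp

lemma eqToHom_eqToHom_aux {C : Type*} [Category C] {a b d : C} (p : a = b) (q : b = a)
    (f : a ⟶ d) : eqToHom p ≫ eqToHom q ≫ f = f := by
  subst p; simp

lemma natR_aux {C : Type*} [Category C] (F : C ⥤ C) (e : F = 𝟭 C) {x a b c : C} (f : a ⟶ b)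
    (g : b ⟶ c) (p : x = a) (q : x = F.obj a) (r : F.obj b = b) :
    eqToHom p ≫ f ≫ g = eqToHom q ≫ F.map f ≫ eqToHom r ≫ g := by
  subst e; subst p; simp

lemma natL_aux {A B : Type*} [Category A] [Category B] (G H : A ⥤ B) (e : G = H) {a a' : A}
    (φ : a ⟶ a') {x y c : B} (ψ : G.obj a' ⟶ c) (p : x = y) (q : y = G.obj a) (r : x = H.obj a)
    (s : H.obj a' = G.obj a') :
    eqToHom p ≫ eqToHom q ≫ G.map φ ≫ ψ = (eqToHom r ≫ H.map φ) ≫ eqToHom s ≫ ψ := by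
  subst e; subst p; simp

lemma Lobj_eq {I : Type u} [SmallCategory I] (𝒥 : I ⥤ Cat.{u, u}) (i : I)
    {X Y : CostructuredArrow (Grothendieck.forget 𝒥) i} (h : X ⟶ Y) :
    (𝒥.map X.hom).toFunctor.obj X.left.fiber = (𝒥.map Y.hom).toFunctor.obj ((𝒥.map h.left.base).toFunctor.obj X.left.fiber) := by
  have e : 𝒥.map h.left.base ≫ 𝒥.map Y.hom = 𝒥.map X.hom := by
    exact (𝒥.map_comp _ _).symm.trans (congrArg 𝒥.map (CostructuredArrow.w h))
  exact (congrArg (fun (F : 𝒥.obj X.left.base ⟶ 𝒥.obj i) => F.toFunctor.obj X.left.fiber) e).symm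

def Lfun {I : Type u} [SmallCategory I] (𝒥 : I ⥤ Cat.{u, u}) (i : I) :
    CostructuredArrow (Grothendieck.forget 𝒥) i ⥤ (𝒥.obj i : Type u) where
  obj X := (𝒥.map X.hom).toFunctor.obj X.left.fiber
  map {X Y} h := eqToHom (Lobj_eq 𝒥 i h) ≫ (𝒥.map Y.hom).toFunctor.map h.left.fiber
  map_id X := by
    exact eqToHom_map_eqToHom_aux _ (by simp; exact rfl) _
  map_comp {X Y Z} f g := by
    have wg := CostructuredArrow.w g
    dsimp [Grothendieck.forget] at wg
    have key : (𝒥.map g.left.base).toFunctor ⋙ (𝒥.map Z.hom).toFunctor = (𝒥.map Y.hom).toFunctor := by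
      rw [← wg]; exact (congrArg Cat.Hom.toFunctor (𝒥.map_comp _ _)).symm
    exact map_comp_aux _ _ _ key _ _ _ _ _ _

lemma base_eq {I : Type u} [SmallCategory I] (𝒥 : I ⥤ Cat.{u, u}) (i : I)
    {X : CostructuredArrow (Grothendieck.forget 𝒥) i} {j : 𝒥.obj i}
    (h : X ⟶ (epsilonComma 𝒥 i).obj j) : h.left.base = X.hom := by
  have w := CostructuredArrow.w h
  dsimp [Grothendieck.forget, epsilonComma, Functor.toCostructuredArrow] at w
  exact (Category.comp_id _).symm.trans w

def adjL {I : Type u} [SmallCategory I] (𝒥 : I ⥤ Cat.{u, u}) (i : I) :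
    Lfun 𝒥 i ⊣ epsilonComma 𝒥 i :=
  Adjunction.mkOfHomEquiv
    { homEquiv := fun X j =>
        { toFun := fun g => CostructuredArrow.homMk ⟨X.hom, g⟩ (by simp [epsilonComma, Functor.toCostructuredArrow]; exact Category.comp_id _)
          invFun := fun h =>
            eqToHom (by rw [base_eq 𝒥 i h]; rfl) ≫ h.left.fiber
          left_inv := fun g => by exact Category.id_comp g
          right_inv := fun h => by
            apply CostructuredArrow.hom_ext
            fapply Grothendieck.ext
            · exact (base_eq 𝒥 i h).symm
            · exact eqToHom_eqToHom_aux _ _ _ }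
      homEquiv_naturality_left_symm := fun {X' X j} f g => by
        have key : ((𝒥.map g.left.base).toFunctor : (𝒥.obj X.left.base : Type u) ⥤ (𝒥.obj i : Type u))
            = (𝒥.map X.hom).toFunctor := by rw [base_eq 𝒥 i g]; exact rfl
        have hc := Functor.congr_hom key f.left.fiber
        dsimp [Lfun]
        exact natL_aux _ _ key _ _ _ _ _ _
      homEquiv_naturality_right := fun {X j j'} f g => by
        apply CostructuredArrow.hom_ext
        fapply Grothendieck.ext
        · exact (Category.comp_id _).symm
        · have key : ((𝒥.map (𝟙 i)).toFunctor : (𝒥.obj i : Type u) ⥤ (𝒥.obj i : Type u)) = 𝟭 _ := by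
            rw [𝒥.map_id]; rfl
          have hc := Functor.congr_hom key f
          exact natR_aux _ key _ _ _ _ _ }


theorem epsilonComma_hasLeftAdjoint {I : Type u} [SmallCategory I]
    (𝒥 : I ⥤ Cat.{u, u}) (i : I) :
    ∃ (L : CostructuredArrow (Grothendieck.forget 𝒥) i ⥤ (𝒥.obj i : Type u))
      (_ : L ⊣ epsilonComma 𝒥 i),
      ∀ X : CostructuredArrow (Grothendieck.forget 𝒥) i,
        L.obj X = (𝒥.map X.hom).toFunctor.obj X.left.fiber :=
  ⟨Lfun 𝒥 i, adjL 𝒥 i, fun _ => rfl⟩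
end

section
/- Let I be a small category, 𝒥 : I ⥤ Cat a functor, ρ : ∫_I 𝒥 ⥤ I the projection of the Grothendieck construction, and 𝒞 a cocomplete category. For every functor F : ∫_I 𝒥 ⥤ 𝒞 and every object i of I, the canonical comparison morphism from the colimit of F ∘ ε_i over 𝒥(i) to the value at i of the (pointwise) left Kan extension of F along ρ is an isomorphism: colim_{𝒥(i)} (F ∘ ε_i) ≅ (Lan_ρ F)(i). -/
/-!
Statement 1: Let `I` be a small category, `𝒥 : I ⥤ Cat`, `ρ : ∫_I 𝒥 ⥤ I` the projection of
the Grothendieck construction, and `𝒞` a cocomplete category. For every `F : ∫_I 𝒥 ⥤ 𝒞` and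
every `i : I`, the canonical comparison morphism
`colim_{𝒥(i)} (F ∘ ε_i) ⟶ (Lan_ρ F)(i)` is an isomorphism.
-/

open CategoryTheory CategoryTheory.Limits

universe v' u' u

/-- The canonical cocone on `ε_i ⋙ F` with cocone point `(Lan_ρ F)(i)`, whose legs are given
by the unit `F ⟶ ρ ⋙ Lan_ρ F` of the left Kan extension along the projection
`ρ = Grothendieck.forget 𝒥`. -/
noncomputable def lanComparisonCocone {I : Type u} [SmallCategory I] (𝒥 : I ⥤ Cat.{u, u})
    {𝒞 : Type u'} [Category.{v'} 𝒞] [HasColimitsOfSize.{u, u} 𝒞]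
    (F : Grothendieck 𝒥 ⥤ 𝒞) (i : I) :
    Cocone (Grothendieck.ι 𝒥 i ⋙ F) where
  pt := ((Grothendieck.forget 𝒥).leftKanExtension F).obj i
  ι :=
    { app := fun j =>
        ((Grothendieck.forget 𝒥).leftKanExtensionUnit F).app ((Grothendieck.ι 𝒥 i).obj j)
      naturality := fun j j' g => by
        have h := ((Grothendieck.forget 𝒥).leftKanExtensionUnit F).naturality
          ((Grothendieck.ι 𝒥 i).map g)
        dsimp at h ⊢
        erw [Category.comp_id, h, CategoryTheory.Functor.map_id, Category.comp_id] }

section Aux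

variable {I : Type u} [SmallCategory I] (𝒥 : I ⥤ Cat.{u, u})
    {𝒞 : Type u'} [Category.{v'} 𝒞] [HasColimitsOfSize.{u, u} 𝒞]
    (F : Grothendieck 𝒥 ⥤ 𝒞)

/-- The fiberwise colimit together with the canonical natural transformation is a universal
left extension of `F` along the forgetful functor. -/
noncomputable def fiberwiseColimitIsUniversal :
    (Functor.LeftExtension.mk (fiberwiseColimit F)
      (natTransIntoForgetCompFiberwiseColimit F)).IsUniversal := by
  refine IsInitial.ofUniqueHom (fun s => StructuredArrow.homMk
    { app := fun i => colimit.desc (Grothendieck.ι 𝒥 i ⋙ F)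
        { pt := s.right.obj i
          ι :=
            { app := fun j => s.hom.app ((Grothendieck.ι 𝒥 i).obj j)
              naturality := fun j j' g => by
                have h := s.hom.naturality ((Grothendieck.ι 𝒥 i).map g)
                dsimp at h ⊢
                erw [Category.comp_id, h, CategoryTheory.Functor.map_id, Category.comp_id] } }
      naturality := fun i i' f => by
        dsimp
        apply colimit.hom_ext
        intro j
        change colimit.ι _ j ≫ (fiberwiseColimit F).map f ≫ _ = _
        have h := s.hom.naturality ((Grothendieck.ιNatTrans f).app j)
        dsimp at h
        erw [Category.assoc, ι_colimMap_assoc, colimit.ι_pre_assoc, colimit.ι_desc, colimit.ι_desc_assoc]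
        simp only [NatTrans.comp_app, Functor.whiskerRight_app, Functor.associator_hom_app, Category.comp_id]
        exact h } ?_ ) ?_
  · ext X
    dsimp
    simp
    exact colimit.ι_desc _ _
  · intro s m
    ext1
    have hw := StructuredArrow.w m
    ext i : 2
    apply colimit.hom_ext
    intro j
    have := congrArg (fun (t : F ⟶ _) => t.app ((Grothendieck.ι 𝒥 i).obj j)) hw
    dsimp at this ⊢
    simp only [colimit.ι_desc]
    simp at this
    exact this

instance : (fiberwiseColimit F).IsLeftKanExtension
    (natTransIntoForgetCompFiberwiseColimit F) :=
  ⟨⟨fiberwiseColimitIsUniversal 𝒥 F⟩⟩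

end Aux

/-- The canonical comparison morphism `colim_{𝒥(i)} (F ∘ ε_i) ⟶ (Lan_ρ F)(i)` is an
isomorphism. -/
theorem isIso_lanComparison {I : Type u} [SmallCategory I] (𝒥 : I ⥤ Cat.{u, u})
    {𝒞 : Type u'} [Category.{v'} 𝒞] [HasColimitsOfSize.{u, u} 𝒞]
    (F : Grothendieck 𝒥 ⥤ 𝒞) (i : I) :
    IsIso (colimit.desc (Grothendieck.ι 𝒥 i ⋙ F) (lanComparisonCocone 𝒥 F i)) := by
  set c := colimit.desc (Grothendieck.ι 𝒥 i ⋙ F) (lanComparisonCocone 𝒥 F i) with hc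
  let φ : (Grothendieck.forget 𝒥).leftKanExtension F ⟶ fiberwiseColimit F :=
    Functor.descOfIsLeftKanExtension _ ((Grothendieck.forget 𝒥).leftKanExtensionUnit F) _
      (natTransIntoForgetCompFiberwiseColimit F)
  have hfac : ∀ (X : Grothendieck 𝒥),
      ((Grothendieck.forget 𝒥).leftKanExtensionUnit F).app X ≫ φ.app X.base =
        (natTransIntoForgetCompFiberwiseColimit F).app X :=
    fun X => Functor.descOfIsLeftKanExtension_fac_app _ _ _ _ X
  have hiso : IsIso φ := by
    rw [← Functor.isLeftKanExtension_iff_isIso φ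
      ((Grothendieck.forget 𝒥).leftKanExtensionUnit F)
      (natTransIntoForgetCompFiberwiseColimit F)
      (Functor.descOfIsLeftKanExtension_fac _ _ _ _)]
    infer_instance
  have h : c ≫ φ.app i = 𝟙 _ := by
    apply colimit.hom_ext
    intro j
    erw [← Category.assoc, hc, colimit.ι_desc]
    have := hfac ((Grothendieck.ι 𝒥 i).obj j)
    dsimp [lanComparisonCocone] at this ⊢
    erw [this, Category.comp_id]
    rfl
  have : IsIso (c ≫ φ.app i) := by rw [h]; exact IsIso.id _
  exact @IsIso.of_isIso_comp_right _ _ _ _ _ c (φ.app i) (NatIso.isIso_app_of_isIso φ i) this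
end

section
/- Let s : P → Q be a monotone map of partially ordered sets satisfying: (a) for every p ∈ P and every q' ∈ Q with s(p) ≤ q', the set {p' ∈ P : s(p') = q' and p ≤ p'} has a least element, denoted t_{q'}(p); and (b) for every p ∈ P and all q' ≤ q'' in Q with s(p) ≤ q', one has t_{q''}(t_{q'}(p)) = t_{q''}(p). Then: (1) for all q ≤ q' in Q, p ↦ t_{q'}(p) restricts to a monotone map s⁻¹(q) → s⁻¹(q'); (2) these maps make q ↦ s⁻¹(q) a functor from Q (viewed as a category) to partially ordered sets; and (3) the Grothendieck construction ∫_Q s⁻¹(−) is isomorphic as a category to P (viewed as a category), via the functor sending the object (q, p) to p, and this isomorphism is compatible with the projections to Q (the projection ρ on one side and s on the other). -/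
/-!
Statement 5: Let `s : P → Q` be a monotone map of posets such that (a) for all `p : P` and
`q' : Q` with `s p ≤ q'`, the set `{p' | s p' = q' ∧ p ≤ p'}` has a least element `t p q'`,
and (b) `t (t p q') q'' = t p q''` whenever `s p ≤ q' ≤ q''`. Then (1) each `t` restricts to
a monotone map `s⁻¹(q) → s⁻¹(q')` for `q ≤ q'`; (2) these maps make `q ↦ s⁻¹(q)` a functor
from `Q` to partially ordered sets; (3) the Grothendieck construction `∫_Q s⁻¹(−)` is
isomorphic as a category to `P`, via the functor sending `(q, p)` to `p`, compatibly with
the projections to `Q`.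
-/

open CategoryTheory

universe u

/-- The fiber `s⁻¹(q)` of `s : P → Q` over `q`, as a partially ordered set. -/
abbrev OrderFiber {P Q : Type u} [PartialOrder P] (s : P → Q) (q : Q) : Type u :=
  {p : P // s p = q}

section

variable {P Q : Type u} [PartialOrder P] [PartialOrder Q] (s : P → Q)
  (t : ∀ (p : P) (q' : Q), s p ≤ q' → P)
  (ht : ∀ (p : P) (q' : Q) (h : s p ≤ q'),
    IsLeast {p' : P | s p' = q' ∧ p ≤ p'} (t p q' h))

/-- The map `s⁻¹(q) → s⁻¹(q')`, `p ↦ t_{q'}(p)`, for `q ≤ q'`. -/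
def fiberMap (q q' : Q) (hqq' : q ≤ q') (p : OrderFiber s q) : OrderFiber s q' :=
  ⟨t p.1 q' (le_of_eq_of_le p.2 hqq'), (ht p.1 q' _).1.1⟩

/-- Conclusion (1): the maps `p ↦ t_{q'}(p)` are monotone on fibers. -/
theorem fiberMap_monotone (q q' : Q) (hqq' : q ≤ q') :
    Monotone (fiberMap s t ht q q' hqq') := by
  intro p₁ p₂ h
  exact Subtype.mk_le_mk.mpr
    ((ht p₁.1 q' _).2 ⟨(ht p₂.1 q' _).1.1,
      le_trans (Subtype.coe_le_coe.2 h) (ht p₂.1 q' _).1.2⟩)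

theorem fiberMap_self (q : Q) (hqq : q ≤ q) (p : OrderFiber s q) :
    fiberMap s t ht q q hqq p = p :=
  Subtype.ext (le_antisymm ((ht p.1 q _).2 ⟨p.2, le_rfl⟩) (ht p.1 q _).1.2)

variable (htr : ∀ (p : P) (q' q'' : Q) (h : s p ≤ q') (h' : q' ≤ q''),
    t (t p q' h) q'' (le_of_eq_of_le (ht p q' h).1.1 h') = t p q'' (h.trans h'))

/-- Conclusion (2): the assignment `q ↦ s⁻¹(q)` together with the maps `t_{q'}` is a functor
from `Q` (viewed as a category) to partially ordered sets (viewed as categories). -/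
def fiberFunctor : Q ⥤ Cat.{u, u} where
  obj q := Cat.of (OrderFiber s q)
  map {q q'} f := (fiberMap_monotone s t ht q q' (leOfHom f)).functor.toCatHom
  map_id q := by
    apply Cat.Hom.ext
    apply CategoryTheory.Functor.ext (fun p => fiberMap_self s t ht q le_rfl p)
  map_comp {q q' q''} f g := by
    apply Cat.Hom.ext
    apply CategoryTheory.Functor.ext
      (fun p => Subtype.ext (htr p.1 q' q'' (le_of_eq_of_le p.2 (leOfHom f)) (leOfHom g)).symm)

/-- The fiber component of an object of the Grothendieck construction of `fiberFunctor`,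
as an element of the corresponding fiber of `s`. -/
def grothFiber (X : Grothendieck (fiberFunctor s t ht htr)) : OrderFiber s X.base :=
  X.fiber

/-- Conclusion (3), the functor: `∫_Q s⁻¹(−) ⥤ P`, sending `(q, p)` to `p`. -/
def grothToBase : Grothendieck (fiberFunctor s t ht htr) ⥤ P where
  obj X := (grothFiber s t ht htr X).1
  map {X Y} f := homOfLE (le_trans (ht (grothFiber s t ht htr X).1 Y.base _).1.2
    (Subtype.coe_le_coe.2 (leOfHom (f.fiber :
      fiberMap s t ht X.base Y.base (leOfHom f.base) (grothFiber s t ht htr X) ⟶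
        grothFiber s t ht htr Y))))
  map_id _ := Subsingleton.elim _ _
  map_comp _ _ := Subsingleton.elim _ _

theorem fiber_functor_grothendieck_iso_base
    {P Q : Type u} [PartialOrder P] [PartialOrder Q] (s : P → Q) (hs : Monotone s)
    (t : ∀ (p : P) (q' : Q), s p ≤ q' → P)
    (ht : ∀ (p : P) (q' : Q) (h : s p ≤ q'),
      IsLeast {p' : P | s p' = q' ∧ p ≤ p'} (t p q' h))
    (htr : ∀ (p : P) (q' q'' : Q) (h : s p ≤ q') (h' : q' ≤ q''),
      t (t p q' h) q'' (le_of_eq_of_le (ht p q' h).1.1 h') = t p q'' (h.trans h')) :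
    -- (1) each `t_{q'}` restricts to a monotone map on fibers:
    (∀ (q q' : Q) (hqq' : q ≤ q'), Monotone (fiberMap s t ht q q' hqq')) ∧
    -- (2) these maps assemble into the functor `fiberFunctor` with the prescribed fibers:
    (∀ q : Q, (fiberFunctor s t ht htr).obj q = Cat.of (OrderFiber s q)) ∧
    -- (3) `∫_Q s⁻¹(−) ⥤ P`, `(q, p) ↦ p`, is an isomorphism of categories ...
    (∃ G' : P ⥤ Grothendieck (fiberFunctor s t ht htr),
      grothToBase s t ht htr ⋙ G' = 𝟭 (Grothendieck (fiberFunctor s t ht htr)) ∧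
      G' ⋙ grothToBase s t ht htr = 𝟭 P) ∧
    (∀ X : Grothendieck (fiberFunctor s t ht htr),
      (grothToBase s t ht htr).obj X = (grothFiber s t ht htr X).1) ∧
    -- ... compatible with the projections to `Q`:
    grothToBase s t ht htr ⋙ hs.functor = Grothendieck.forget (fiberFunctor s t ht htr) := by
  have hsub : ∀ X Y : Grothendieck (fiberFunctor s t ht htr), Subsingleton (X ⟶ Y) := by
    intro X Y
    constructor
    intro f g
    apply Grothendieck.ext
    · exact ULift.ext _ _ (Subsingleton.elim _ _)
    · exact Subsingleton.elim _ _
  refine ⟨fiberMap_monotone s t ht, fun q => rfl, ⟨?_, ?_, ?_⟩, fun X => rfl, ?_⟩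
  · exact
      { obj := fun p => ⟨s p, ⟨p, rfl⟩⟩
        map := fun {p p'} f =>
          ⟨homOfLE (hs (leOfHom f)),
            (homOfLE (Subtype.mk_le_mk.mpr ((ht p (s p') _).2 ⟨rfl, leOfHom f⟩)) :
              fiberMap s t ht (s p) (s p') (hs (leOfHom f)) ⟨p, rfl⟩ ⟶ ⟨p', rfl⟩)⟩
        map_id := fun p => (hsub _ _).elim _ _
        map_comp := fun f g => (hsub _ _).elim _ _ }
  · apply CategoryTheory.Functor.ext
    · intro X Y f
      exact (hsub _ _).elim _ _
    · intro X
      obtain ⟨q, p, hp⟩ := X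
      subst hp
      rfl
  · apply CategoryTheory.Functor.ext
    · intro X Y f
      exact Subsingleton.elim _ _
    · intro p
      rfl
  · apply CategoryTheory.Functor.ext
    · intro X Y f
      exact Subsingleton.elim _ _
    · intro X
      exact (grothFiber s t ht htr X).2

end
end

section
/- Let X be a noetherian topological space and 𝒮 a stratification of X. Then only finitely many members of 𝒮 are nonempty, every member of 𝒮 has finitely many connected components, and consequently the set of strata of 𝒮 is finite. -/
/-!
Statement 6: Let `X` be a noetherian topological space and `𝒮` a stratification of `X`
(a partition of `X` into locally closed subsets satisfying the local finiteness condition (i)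
and the frontier condition (ii)). Then only finitely many members of `𝒮` are nonempty, every
member of `𝒮` has finitely many connected components, and the set of strata of `𝒮`
(the connected components of the members of `𝒮`) is finite.
-/

theorem stratification_of_noetherian_finite
    {X : Type*} [TopologicalSpace X] [TopologicalSpace.NoetherianSpace X]
    (𝒮 : Set (Set X))
    -- `𝒮` is a partition of `X` into locally closed subsets:
    (hlc : ∀ S ∈ 𝒮, IsLocallyClosed S)
    (hdisj : 𝒮.Pairwise fun S T => Disjoint S T)
    (hcover : ⋃₀ 𝒮 = Set.univ)
    -- Condition (i): every point has an open neighborhood `U` such that `S ∩ U` has finitely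
    -- many connected components for every `S ∈ 𝒮`, and is empty for all but finitely many `S`:
    (hloc : ∀ x : X, ∃ U : Set X, IsOpen U ∧ x ∈ U ∧
      (∀ S ∈ 𝒮, {C : Set X | ∃ y ∈ S ∩ U, C = connectedComponentIn (S ∩ U) y}.Finite) ∧
      {S ∈ 𝒮 | S ∩ U ≠ ∅}.Finite)
    -- Condition (ii): the closure of each member is the union of the members it contains:
    (hfront : ∀ T ∈ 𝒮, closure T = ⋃₀ {S ∈ 𝒮 | S ⊆ closure T}) :
    {S ∈ 𝒮 | S.Nonempty}.Finite ∧
    (∀ S ∈ 𝒮, {C : Set X | ∃ y ∈ S, C = connectedComponentIn S y}.Finite) ∧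
    {C : Set X | ∃ S ∈ 𝒮, ∃ y ∈ S, C = connectedComponentIn S y}.Finite := by
  classical
  choose U hUopen hxU hcomp hfin using hloc
  have hXcompact : IsCompact (Set.univ : Set X) :=
    TopologicalSpace.NoetherianSpace.isCompact _
  have hcov : (Set.univ : Set X) ⊆ ⋃ x : X, U x :=
    fun x _ => Set.mem_iUnion.2 ⟨x, hxU x⟩
  obtain ⟨t, ht⟩ := hXcompact.elim_finite_subcover U hUopen hcov
  -- Finitely many nonempty members
  have h1 : {S ∈ 𝒮 | S.Nonempty}.Finite := by
    refine Set.Finite.subset (t.finite_toSet.biUnion fun x _ => hfin x) ?_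
    rintro S ⟨hS, y, hy⟩
    obtain ⟨x, hxt, hyU⟩ := Set.mem_iUnion₂.1 (ht (Set.mem_univ y))
    exact Set.mem_iUnion₂.2 ⟨x, hxt, hS, (Set.nonempty_iff_ne_empty.1 ⟨y, hy, hyU⟩)⟩
  -- Each member has finitely many components
  have h2 : ∀ S ∈ 𝒮, {C : Set X | ∃ y ∈ S, C = connectedComponentIn S y}.Finite := by
    intro S hS
    have hsub : {C : Set X | ∃ y ∈ S, C = connectedComponentIn S y} ⊆
        ⋃ x ∈ t, (fun C => ⋃ z ∈ C, connectedComponentIn S z) ''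
          {C : Set X | ∃ y ∈ S ∩ U x, C = connectedComponentIn (S ∩ U x) y} := by
      rintro _ ⟨y, hy, rfl⟩
      obtain ⟨x, hxt, hyU⟩ := Set.mem_iUnion₂.1 (ht (Set.mem_univ y))
      have hy' : y ∈ S ∩ U x := ⟨hy, hyU⟩
      have hconst : ∀ z ∈ connectedComponentIn (S ∩ U x) y,
          connectedComponentIn S z = connectedComponentIn S y := by
        intro z hz
        have hC : connectedComponentIn (S ∩ U x) y ⊆ connectedComponentIn S y :=
          (isPreconnected_connectedComponentIn).subset_connectedComponentIn
            (mem_connectedComponentIn hy')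
            ((connectedComponentIn_subset _ _).trans Set.inter_subset_left)
        exact (connectedComponentIn_eq (hC hz)).symm
      refine Set.mem_iUnion₂.2 ⟨x, hxt,
        ⟨connectedComponentIn (S ∩ U x) y, ⟨y, hy', rfl⟩, ?_⟩⟩
      ext w
      simp only [Set.mem_iUnion]
      constructor
      · rintro ⟨z, hz, hw⟩; rwa [hconst z hz] at hw
      · intro hw; exact ⟨y, mem_connectedComponentIn hy', hw⟩
    exact Set.Finite.subset
      (t.finite_toSet.biUnion fun x _ => (hcomp x S hS).image _) hsub
  refine ⟨h1, h2, ?_⟩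
  have hsub3 : {C : Set X | ∃ S ∈ 𝒮, ∃ y ∈ S, C = connectedComponentIn S y} ⊆
      ⋃ S ∈ {S ∈ 𝒮 | S.Nonempty}, {C : Set X | ∃ y ∈ S, C = connectedComponentIn S y} := by
    rintro _ ⟨S, hS, y, hy, rfl⟩
    exact Set.mem_iUnion₂.2 ⟨S, ⟨hS, y, hy⟩, ⟨y, hy, rfl⟩⟩
  exact Set.Finite.subset (h1.biUnion fun S hS => h2 S hS.1) hsub3
end

section
/- Let G be a group acting by homeomorphisms on locally compact Hausdorff topological spaces X and Y, with both actions free (g·x = x implies g = 1) and properly discontinuous, and let f : X → Y be a continuous G-equivariant map. Let π_X : X → G\X and π_Y : Y → G\Y be the quotient maps and f̄ : G\X → G\Y the induced continuous map. Then the map X → (G\X) ×_{G\Y} Y sending x to ([x], f(x)) is a homeomorphism onto the fiber product; that is, the commutative square with top f : X → Y, bottom f̄ : G\X → G\Y, and vertical maps π_X, π_Y is cartesian in topological spaces. Consequently, if f̄ is a proper map, then f is a proper map. -/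
/-!
Statement 8: Let `G` be a group acting by homeomorphisms on locally compact Hausdorff spaces
`X` and `Y`, both actions free and properly discontinuous, and `f : X → Y` a continuous
`G`-equivariant map. The square formed by `f`, the induced map `f̄ : G\X → G\Y` and the two
quotient maps is cartesian: the map `X → (G\X) ×_{G\Y} Y`, `x ↦ ([x], f x)`, is a
homeomorphism. Consequently, if `f̄` is a proper map, then `f` is a proper map.
-/

open MulAction

/-- The map `f̄ : G\X → G\Y` induced on orbit-space quotients by a `G`-equivariant map
`f : X → Y`. -/
def inducedOrbitQuotientMap (G : Type*) [Group G] {X Y : Type*}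
    [MulAction G X] [MulAction G Y] (f : X → Y)
    (hequiv : ∀ (g : G) (x : X), f (g • x) = g • f x) :
    Quotient (orbitRel G X) → Quotient (orbitRel G Y) :=
  Quotient.lift (fun x => Quotient.mk (orbitRel G Y) (f x)) (by
    intro a b hab
    obtain ⟨g, hg⟩ := hab
    exact Quotient.sound ⟨g, by rw [← hg]; exact (hequiv g b).symm⟩)

theorem quotient_square_cartesian_of_properlyDiscontinuous
    {G X Y : Type*} [Group G] [TopologicalSpace X] [TopologicalSpace Y]
    [LocallyCompactSpace X] [T2Space X] [LocallyCompactSpace Y] [T2Space Y]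
    [MulAction G X] [MulAction G Y]
    [ContinuousConstSMul G X] [ContinuousConstSMul G Y]
    [ProperlyDiscontinuousSMul G X] [ProperlyDiscontinuousSMul G Y]
    (hfreeX : ∀ (g : G) (x : X), g • x = x → g = 1)
    (hfreeY : ∀ (g : G) (y : Y), g • y = y → g = 1)
    (f : X → Y) (hf : Continuous f)
    (hequiv : ∀ (g : G) (x : X), f (g • x) = g • f x) :
    IsHomeomorph (fun x : X =>
      (⟨(Quotient.mk (orbitRel G X) x, f x), rfl⟩ :
        {p : Quotient (orbitRel G X) × Y //
          inducedOrbitQuotientMap G f hequiv p.1 = Quotient.mk (orbitRel G Y) p.2})) ∧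
    (IsProperMap (inducedOrbitQuotientMap G f hequiv) → IsProperMap f) := by
  classical
  set fb := inducedOrbitQuotientMap G f hequiv with hfb
  set P := {p : Quotient (orbitRel G X) × Y //
      fb p.1 = Quotient.mk (orbitRel G Y) p.2} with hP
  set φ : X → P := (fun x : X => (⟨(Quotient.mk (orbitRel G X) x, f x), rfl⟩ : P)) with hφ
  have hfbcont : Continuous fb := continuous_quot_lift _ (continuous_quotient_mk'.comp hf)
  have hφcont : Continuous φ := (continuous_quotient_mk'.prodMk hf).subtype_mk _
  -- injectivity
  have hinj : Function.Injective φ := by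
    intro x x' h
    have h1 : Quotient.mk (orbitRel G X) x = Quotient.mk (orbitRel G X) x' :=
      congrArg (fun p : P => p.1.1) h
    have h2 : f x = f x' := congrArg (fun p : P => p.1.2) h
    obtain ⟨g, hg0⟩ := Quotient.exact h1
    have hg : g • x' = x := hg0
    have : g • f x' = f x' := by
      rw [← hequiv, hg, h2]
    rw [hfreeY g _ this, one_smul] at hg
    exact hg.symm
  -- surjectivity
  have hsurj : Function.Surjective φ := by
    rintro ⟨⟨a, y⟩, hp⟩
    obtain ⟨x, rfl⟩ := Quotient.exists_rep a
    have hxy : (Quotient.mk (orbitRel G Y) (f x)) = Quotient.mk (orbitRel G Y) y := hp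
    obtain ⟨g, hg⟩ := Quotient.exact hxy
    refine ⟨g⁻¹ • x, ?_⟩
    apply Subtype.ext
    apply Prod.ext
    · exact Quotient.sound ⟨g⁻¹, rfl⟩
    · show f (g⁻¹ • x) = y
      rw [hequiv, ← hg, inv_smul_smul]
  -- open map : the key point, using proper discontinuity of the action on Y
  have hopen : IsOpenMap φ := by
    intro V hV
    rw [isOpen_iff_mem_nhds]
    rintro p ⟨x₀, hx₀V, rfl⟩
    obtain ⟨K₀, hK₀comp, hx₀K₀, hK₀V⟩ := exists_compact_subset hV hx₀V
    obtain ⟨L₀, hL₀comp, hL₀nhds⟩ := exists_compact_mem_nhds (f x₀)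
    have hfK₀ : IsCompact (f '' K₀) := hK₀comp.image hf
    set T : Set G := {g : G | (g • ·) '' (f '' K₀) ∩ L₀ ≠ ∅} with hT
    have hTfin : T.Finite :=
      by rw [hT]; simpa only [Set.nonempty_iff_ne_empty] using
        ProperlyDiscontinuousSMul.finite_disjoint_inter_image hfK₀ hL₀comp
    have hSfin : (T \ {1} : Set G).Finite := hTfin.diff
    -- separating neighborhoods
    have hsep : ∀ g : G, ∃ AB : Set Y × Set Y, IsOpen AB.1 ∧ IsOpen AB.2 ∧ f x₀ ∈ AB.2 ∧
        (g ∈ T \ ({1} : Set G) → g • f x₀ ∈ AB.1 ∧ Disjoint AB.1 AB.2) := by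
      intro g
      by_cases hg : g ∈ T \ ({1} : Set G)
      · have hne : g • f x₀ ≠ f x₀ := fun h => hg.2 (hfreeY g _ h)
        obtain ⟨u, v, hu, hv, hgu, hxv, huv⟩ := t2_separation hne
        exact ⟨(u, v), hu, hv, hxv, fun _ => ⟨hgu, huv⟩⟩
      · exact ⟨(∅, Set.univ), isOpen_empty, isOpen_univ, Set.mem_univ _,
          fun h => absurd h hg⟩
    choose AB hAopen hBopen hxB hbad using hsep
    set U : Set X := interior K₀ ∩ ⋂ g ∈ (T \ {1} : Set G), {x : X | g • f x ∈ (AB g).1}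
      with hU
    set M : Set Y := interior L₀ ∩ ⋂ g ∈ (T \ {1} : Set G), (AB g).2 with hM
    have hUopen : IsOpen U := by
      refine isOpen_interior.inter (hSfin.isOpen_biInter fun g _ => ?_)
      exact ((hAopen g).preimage (continuous_const_smul g)).preimage hf
    have hMopen : IsOpen M := by
      refine isOpen_interior.inter (hSfin.isOpen_biInter fun g _ => hBopen g)
    have hx₀U : x₀ ∈ U := by
      refine ⟨hx₀K₀, Set.mem_biInter fun g hg => (hbad g hg).1⟩
    have hfx₀M : f x₀ ∈ M := by
      refine ⟨mem_interior_iff_mem_nhds.2 hL₀nhds, Set.mem_biInter fun g hg => hxB g⟩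
    -- the neighborhood N of φ x₀ inside φ '' V
    have hπUopen : IsOpen (Quotient.mk (orbitRel G X) '' U) :=
      isOpenMap_quotient_mk'_mul U hUopen
    set N : Set P := Subtype.val ⁻¹' ((Quotient.mk (orbitRel G X) '' U) ×ˢ M) with hN
    have hNopen : IsOpen N := (hπUopen.prod hMopen).preimage continuous_subtype_val
    have hφN : φ x₀ ∈ N := ⟨⟨x₀, hx₀U, rfl⟩, hfx₀M⟩
    have hNsub : N ⊆ φ '' V := by
      rintro ⟨⟨a, y⟩, hp⟩ ⟨ha, hy⟩
      obtain ⟨x', hx'U, rfl⟩ := ha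
      have hxy : (Quotient.mk (orbitRel G Y) (f x')) = Quotient.mk (orbitRel G Y) y := hp
      obtain ⟨g, hg⟩ := Quotient.exact hxy
      have hy' : y = g⁻¹ • f x' := by rw [← hg, inv_smul_smul]
      have hx'K₀ : x' ∈ K₀ := interior_subset hx'U.1
      have hyL₀ : y ∈ L₀ := interior_subset hy.1
      have hginvT : g⁻¹ ∈ T := by
        rw [hT, Set.mem_setOf_eq, ← Set.nonempty_iff_ne_empty]
        exact ⟨y, ⟨f x', ⟨x', hx'K₀, rfl⟩, hy'.symm⟩, hyL₀⟩
      by_cases hg1 : g⁻¹ = 1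
      · have : y = f x' := by rw [hy', hg1, one_smul]
        refine ⟨x', hK₀V hx'K₀, ?_⟩
        apply Subtype.ext
        exact Prod.ext rfl this.symm
      · exfalso
        have hgS : g⁻¹ ∈ (T \ {1} : Set G) := ⟨hginvT, hg1⟩
        have hyA : y ∈ (AB g⁻¹).1 := by
          rw [hy']
          exact Set.mem_iInter₂.1 hx'U.2 g⁻¹ hgS
        have hyB : y ∈ (AB g⁻¹).2 := Set.mem_iInter₂.1 hy.2 g⁻¹ hgS
        exact Set.disjoint_left.mp (hbad g⁻¹ hgS).2 hyA hyB
    exact Filter.mem_of_superset (hNopen.mem_nhds hφN) hNsub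
  have hhomeo : IsHomeomorph φ := by
    rw [isHomeomorph_iff_exists_homeomorph]
    exact ⟨Equiv.toHomeomorphOfContinuousOpen
      (Equiv.ofBijective φ ⟨hinj, hsurj⟩) hφcont hopen, rfl⟩
  refine ⟨hhomeo, fun hProper => ?_⟩
  rw [isProperMap_iff_isCompact_preimage]
  refine ⟨hf, fun K hK => ?_⟩
  have hKey : f ⁻¹' K = φ ⁻¹' (Subtype.val ⁻¹' (Set.univ ×ˢ K)) := by
    ext x
    simp [hφ]
  rw [hKey]
  apply hhomeo.isProperMap.isCompact_preimage
  rw [Subtype.isCompact_iff]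
  have hDclosed : IsClosed {p : Quotient (orbitRel G X) × Y |
      fb p.1 = Quotient.mk (orbitRel G Y) p.2} :=
    isClosed_eq (hfbcont.comp continuous_fst) (continuous_quotient_mk'.comp continuous_snd)
  have hCcomp : IsCompact ((fb ⁻¹' (Quotient.mk (orbitRel G Y) '' K)) ×ˢ K) :=
    (hProper.isCompact_preimage (hK.image continuous_quotient_mk')).prod hK
  have himg : Subtype.val '' (Subtype.val ⁻¹' (Set.univ ×ˢ K) : Set P) =
      {p : Quotient (orbitRel G X) × Y | fb p.1 = Quotient.mk (orbitRel G Y) p.2} ∩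
        ((fb ⁻¹' (Quotient.mk (orbitRel G Y) '' K)) ×ˢ K) := by
    ext p
    constructor
    · rintro ⟨⟨q, hq⟩, ⟨-, hK2⟩, rfl⟩
      refine ⟨hq, ?_, hK2⟩
      rw [Set.mem_preimage, hq]
      exact ⟨q.2, hK2, rfl⟩
    · rintro ⟨hq, -, hK2⟩
      exact ⟨⟨p, hq⟩, ⟨Set.mem_univ _, hK2⟩, rfl⟩
  rw [himg]
  exact hCcomp.inter_left hDclosed
end
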